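/- Let π be an odd prime of ℤ[i] with h = ord_π(k). If l ≤ h is even then g(k, πˡ) = φ(πˡ), where φ is the Euler function counting the units of ℤ[i]/(πˡ); if l ≤ h is odd then g(k, πˡ) = 0; and if l = h+1 is even then g(k, πˡ) = −N(π)^{l−1}. -/

import Mathlib

/-- The additive character ẽ(z) = exp(2πi(z/(2i) − z̄/(2i))) on ℂ. -/
noncomputable def etilde (z : ℂ) : ℂ :=
  Complex.exp (2 * Real.pi * Complex.I *
    (z / (2 * Complex.I) - (starRingEnd ℂ) z / (2 * Complex.I)))

open GaussianInt

namespace G13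

lemma etilde_apply (z : ℂ) :
    etilde z = Complex.exp (2 * Real.pi * Complex.I * z.im) := by
  unfold etilde
  congr 2
  rw [div_sub_div_same, Complex.sub_conj]
  have h2I : (2 * Complex.I) ≠ 0 := by simp [Complex.I_ne_zero]
  field_simp
  push_cast
  ring

lemma etilde_add (a b : ℂ) : etilde (a + b) = etilde a * etilde b := by
  rw [etilde_apply, etilde_apply, etilde_apply, ← Complex.exp_add, Complex.add_im]
  push_cast
  ring_nf

lemma etilde_int (g : GaussianInt) : etilde (toComplex g) = 1 := by
  rw [etilde_apply, ← GaussianInt.intCast_im]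
  rw [show (2 * Real.pi * Complex.I * ((((g.im : ℤ) : ℝ)) : ℂ)) =
    ((g.im : ℤ) : ℂ) * (2 * Real.pi * Complex.I) by push_cast; ring]
  exact Complex.exp_int_mul_two_pi_mul_I g.im

lemma etilde_eq_one_iff (z : ℂ) : etilde z = 1 ↔ ∃ n : ℤ, z.im = (n : ℝ) := by
  rw [etilde_apply, Complex.exp_eq_one_iff]
  have h2 : (2 * (Real.pi : ℂ) * Complex.I) ≠ 0 := by
    simp [Complex.I_ne_zero, Real.pi_ne_zero, Complex.ofReal_ne_zero]
  constructor
  · rintro ⟨n, hn⟩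
    refine ⟨n, ?_⟩
    have h : ((z.im : ℝ) : ℂ) = ((n : ℤ) : ℂ) := by
      apply mul_left_cancel₀ h2
      rw [hn]; ring
    exact_mod_cast h
  · rintro ⟨n, hn⟩
    exact ⟨n, by rw [hn]; push_cast; ring⟩

section Residues

variable {π' : GaussianInt} {l : ℕ} {S : Finset GaussianInt}

noncomputable def rep (hS : ∀ y : GaussianInt, ∃! x, x ∈ S ∧ π' ^ l ∣ (y - x))
    (y : GaussianInt) : GaussianInt := (hS y).choose

lemma rep_mem (hS : ∀ y : GaussianInt, ∃! x, x ∈ S ∧ π' ^ l ∣ (y - x)) (y : GaussianInt) :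
    rep hS y ∈ S := (hS y).choose_spec.1.1

lemma rep_dvd (hS : ∀ y : GaussianInt, ∃! x, x ∈ S ∧ π' ^ l ∣ (y - x)) (y : GaussianInt) :
    π' ^ l ∣ y - rep hS y := (hS y).choose_spec.1.2

lemma rep_unique (hS : ∀ y : GaussianInt, ∃! x, x ∈ S ∧ π' ^ l ∣ (y - x)) {x y : GaussianInt}
    (hx : x ∈ S) (hd : π' ^ l ∣ y - x) : x = rep hS y :=
  (hS y).choose_spec.2 x ⟨hx, hd⟩

lemma sum_comp (hS : ∀ y : GaussianInt, ∃! x, x ∈ S ∧ π' ^ l ∣ (y - x))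
    (f : GaussianInt → ℂ) (hf : ∀ x y, π' ^ l ∣ x - y → f x = f y)
    (g g' : GaussianInt → GaussianInt)
    (h1 : ∀ x y, π' ^ l ∣ x - y → π' ^ l ∣ g x - g y)
    (h2 : ∀ x y, π' ^ l ∣ x - y → π' ^ l ∣ g' x - g' y)
    (h3 : ∀ x, π' ^ l ∣ g' (g x) - x)
    (h4 : ∀ x, π' ^ l ∣ g (g' x) - x) :
    ∑ x ∈ S, f (g x) = ∑ x ∈ S, f x := by
  refine Finset.sum_nbij' (fun x => rep hS (g x)) (fun y => rep hS (g' y))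
    (fun a _ => rep_mem hS _) (fun a _ => rep_mem hS _) ?_ ?_ ?_
  · intro a ha
    refine (rep_unique hS ha ?_).symm
    have d1 : π' ^ l ∣ g a - rep hS (g a) := rep_dvd hS _
    have d2 : π' ^ l ∣ g' (g a) - g' (rep hS (g a)) := h2 _ _ d1
    have d3 : π' ^ l ∣ g' (g a) - a := h3 a
    have e : g' (rep hS (g a)) - a
        = (g' (g a) - a) - (g' (g a) - g' (rep hS (g a))) := by ring
    rw [e]; exact dvd_sub d3 d2
  · intro b hb
    refine (rep_unique hS hb ?_).symm
    have d1 : π' ^ l ∣ g' b - rep hS (g' b) := rep_dvd hS _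
    have d2 : π' ^ l ∣ g (g' b) - g (rep hS (g' b)) := h1 _ _ d1
    have d3 : π' ^ l ∣ g (g' b) - b := h4 b
    have e : g (rep hS (g' b)) - b
        = (g (g' b) - b) - (g (g' b) - g (rep hS (g' b))) := by ring
    rw [e]; exact dvd_sub d3 d2
  · intro a _
    exact hf _ _ (rep_dvd hS (g a))

end Residues

section Card

/-- The standard ℤ-basis of the Gaussian integers. -/
noncomputable def giEquiv : GaussianInt ≃ₗ[ℤ] (Fin 2 → ℤ) where
  toFun x := ![x.re, x.im]
  map_add' x y := by
    funext i; fin_cases i <;> simp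
  map_smul' n x := by
    funext i
    have h : n • x = (n : GaussianInt) * x := (zsmul_eq_mul _ _)
    fin_cases i <;> simp [h, Zsqrtd.re_smul, Zsqrtd.im_smul]
  invFun v := ⟨v 0, v 1⟩
  left_inv x := rfl
  right_inv v := by funext i; fin_cases i <;> rfl

noncomputable def giBasis : Module.Basis (Fin 2) ℤ GaussianInt := Module.Basis.ofEquivFun giEquiv

instance : Module.Free ℤ GaussianInt := Module.Free.of_basis giBasis
instance : Module.Finite ℤ GaussianInt := Module.Finite.of_basis giBasis

lemma leftMulMatrix_giBasis (x : GaussianInt) (i j : Fin 2) :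
    Algebra.leftMulMatrix giBasis x i j = ![![x.re, -x.im], ![x.im, x.re]] i j := by
  rw [Algebra.leftMulMatrix_eq_repr_mul]
  have e1 : ∀ y : GaussianInt, giEquiv y = ![y.re, y.im] := fun y => rfl
  have e2 : ∀ v : Fin 2 → ℤ, giEquiv.symm v = ⟨v 0, v 1⟩ := fun v => rfl
  fin_cases i <;> fin_cases j <;>
    simp [giBasis, Module.Basis.ofEquivFun, Finsupp.linearEquivFunOnFinite_symm_coe,
      Finsupp.ofSupportFinite_coe] <;>
    simp [e1, e2, Pi.single_apply, Zsqrtd.re_mul, Zsqrtd.im_mul]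

lemma algNorm (x : GaussianInt) : Algebra.norm ℤ x = Zsqrtd.norm x := by
  rw [Algebra.norm_eq_matrix_det giBasis, Matrix.det_fin_two,
    leftMulMatrix_giBasis, leftMulMatrix_giBasis, leftMulMatrix_giBasis, leftMulMatrix_giBasis]
  simp [Zsqrtd.norm]

lemma card_quot (w : GaussianInt) :
    Nat.card (GaussianInt ⧸ Ideal.span {w}) = (Zsqrtd.norm w).natAbs := by
  have h := Ideal.absNorm_span_singleton w
  rw [Algebra.norm_apply, ← Algebra.norm_apply, algNorm] at h
  rw [← h, Ideal.absNorm_apply, Submodule.cardQuot_apply]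

end Card

section Units

variable {π' : GaussianInt} {l : ℕ}

lemma isUnit_mk_iff (hπ : Prime π') (hl : l ≠ 0) (x : GaussianInt) :
    IsUnit (Ideal.Quotient.mk (Ideal.span {π' ^ l}) x) ↔ ¬ π' ∣ x := by
  constructor
  · intro hu hdvd
    obtain ⟨y', hy'⟩ := isUnit_iff_exists_inv.mp hu
    obtain ⟨y, rfl⟩ := Ideal.Quotient.mk_surjective y'
    rw [← map_mul, show (1 : GaussianInt ⧸ Ideal.span {π' ^ l}) = Ideal.Quotient.mk _ 1 from
      (map_one _).symm, Ideal.Quotient.eq] at hy'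
    have h1 : π' ∣ x * y - 1 :=
      (dvd_pow_self π' hl).trans (Ideal.mem_span_singleton.mp hy')
    have : π' ∣ 1 := by
      have e : (1 : GaussianInt) = x * y - (x * y - 1) := by ring
      rw [e]; exact dvd_sub (hdvd.mul_right y) h1
    exact hπ.not_dvd_one this
  · intro hnd
    have hcop : IsCoprime (π' ^ l) x := ((hπ.coprime_iff_not_dvd).mpr hnd).pow_left
    obtain ⟨a, b, hab⟩ := hcop
    refine isUnit_iff_exists_inv.mpr ⟨Ideal.Quotient.mk _ b, ?_⟩
    rw [← map_mul, show (1 : GaussianInt ⧸ Ideal.span {π' ^ l}) = Ideal.Quotient.mk _ 1 from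
      (map_one _).symm, Ideal.Quotient.eq]
    exact Ideal.mem_span_singleton.mpr ⟨-a, by linear_combination hab⟩

variable {S : Finset GaussianInt}

lemma card_filter_not_dvd [DecidablePred (fun x => ¬ π' ∣ x)] (hπ : Prime π') (hl : l ≠ 0)
    (hS : ∀ y : GaussianInt, ∃! x, x ∈ S ∧ π' ^ l ∣ (y - x)) :
    ((S.filter (fun x => ¬ π' ∣ x)).card)
      = Nat.card ((GaussianInt ⧸ Ideal.span {π' ^ l}))ˣ := by
  rw [← Nat.card_eq_finsetCard]
  apply Nat.card_eq_of_bijective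
    (fun x : {a // a ∈ S.filter (fun x => ¬ π' ∣ x)} =>
      ((isUnit_mk_iff hπ hl x.1).mpr (Finset.mem_filter.mp x.2).2).unit)
  constructor
  · intro a b hab
    have hmk : Ideal.Quotient.mk (Ideal.span {π' ^ l}) a.1
        = Ideal.Quotient.mk (Ideal.span {π' ^ l}) b.1 := by
      have h := congrArg Units.val hab
      rwa [IsUnit.unit_spec, IsUnit.unit_spec] at h
    have hd : π' ^ l ∣ a.1 - b.1 := Ideal.mem_span_singleton.mp (Ideal.Quotient.eq.mp hmk)
    have ha : (a.1 : GaussianInt) ∈ S := (Finset.mem_filter.mp a.2).1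
    have hb : (b.1 : GaussianInt) ∈ S := (Finset.mem_filter.mp b.2).1
    have e1 : b.1 = rep hS a.1 := rep_unique hS hb hd
    have e2 : a.1 = rep hS a.1 := rep_unique hS ha (by simp)
    exact Subtype.ext (e2.trans e1.symm)
  · intro u
    obtain ⟨y, hy⟩ := Ideal.Quotient.mk_surjective (u : GaussianInt ⧸ Ideal.span {π' ^ l})
    have hd : π' ^ l ∣ rep hS y - y := dvd_sub_comm.mp (rep_dvd hS y)
    have hmk : Ideal.Quotient.mk (Ideal.span {π' ^ l}) (rep hS y)
        = Ideal.Quotient.mk (Ideal.span {π' ^ l}) y :=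
      Ideal.Quotient.eq.mpr (Ideal.mem_span_singleton.mpr hd)
    have hu : IsUnit (Ideal.Quotient.mk (Ideal.span {π' ^ l}) (rep hS y)) := by
      rw [hmk, hy]; exact u.isUnit
    have hnd : ¬ π' ∣ rep hS y := (isUnit_mk_iff hπ hl _).mp hu
    refine ⟨⟨rep hS y, Finset.mem_filter.mpr ⟨rep_mem hS y, hnd⟩⟩, ?_⟩
    apply Units.ext
    rw [IsUnit.unit_spec, hmk, hy]

lemma card_filter_dvd [DecidablePred (fun x => π' ∣ x)] (hπ0 : π' ≠ 0) (hl : l ≠ 0)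
    (hS : ∀ y : GaussianInt, ∃! x, x ∈ S ∧ π' ^ l ∣ (y - x)) :
    ((S.filter (fun x => π' ∣ x)).card)
      = (Zsqrtd.norm π').natAbs ^ (l - 1) := by
  obtain ⟨l', rfl⟩ : ∃ l', l = l' + 1 :=
    ⟨l - 1, (Nat.succ_pred_eq_of_pos (Nat.pos_of_ne_zero hl)).symm⟩
  have hpow : π' ^ (l' + 1) = π' * π' ^ l' := by rw [pow_succ]; ring
  have key : Nat.card {a // a ∈ S.filter (fun x => π' ∣ x)}
      = Nat.card (GaussianInt ⧸ Ideal.span {π' ^ l'}) := by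
    apply Nat.card_eq_of_bijective
      (fun x : {a // a ∈ S.filter (fun x => π' ∣ x)} =>
        Ideal.Quotient.mk (Ideal.span {π' ^ l'}) ((Finset.mem_filter.mp x.2).2.choose))
    constructor
    · intro a b hab
      have hea : (a.1 : GaussianInt) = π' * (Finset.mem_filter.mp a.2).2.choose :=
        (Finset.mem_filter.mp a.2).2.choose_spec
      have heb : (b.1 : GaussianInt) = π' * (Finset.mem_filter.mp b.2).2.choose :=
        (Finset.mem_filter.mp b.2).2.choose_spec
      have hd' : π' ^ l' ∣ (Finset.mem_filter.mp a.2).2.choose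
          - (Finset.mem_filter.mp b.2).2.choose :=
        Ideal.mem_span_singleton.mp (Ideal.Quotient.eq.mp hab)
      have hd : π' ^ (l' + 1) ∣ a.1 - b.1 := by
        rw [hea, heb, hpow, ← mul_sub]
        exact mul_dvd_mul_left π' hd'
      have ha : (a.1 : GaussianInt) ∈ S := (Finset.mem_filter.mp a.2).1
      have hb : (b.1 : GaussianInt) ∈ S := (Finset.mem_filter.mp b.2).1
      have e1 : b.1 = rep hS a.1 := rep_unique hS hb hd
      have e2 : a.1 = rep hS a.1 := rep_unique hS ha (by simp)
      exact Subtype.ext (e2.trans e1.symm)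
    · intro b
      obtain ⟨y, hy⟩ := Ideal.Quotient.mk_surjective b
      have hdx : π' ^ (l' + 1) ∣ π' * y - rep hS (π' * y) := rep_dvd hS (π' * y)
      have hπx : π' ∣ rep hS (π' * y) := by
        have e : rep hS (π' * y) = π' * y - (π' * y - rep hS (π' * y)) := by ring
        rw [e]
        exact dvd_sub (dvd_mul_right π' y) ((dvd_pow_self π' hl).trans hdx)
      have hmem : rep hS (π' * y) ∈ S.filter (fun x => π' ∣ x) :=
        Finset.mem_filter.mpr ⟨rep_mem hS _, hπx⟩
      refine ⟨⟨rep hS (π' * y), hmem⟩, ?_⟩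
      have hex : rep hS (π' * y) = π' * (Finset.mem_filter.mp hmem).2.choose :=
        (Finset.mem_filter.mp hmem).2.choose_spec
      have hcanc : π' ^ l' ∣ (Finset.mem_filter.mp hmem).2.choose - y := by
        have h1 : π' * π' ^ l' ∣ π' * (y - (Finset.mem_filter.mp hmem).2.choose) := by
          rw [← hpow, mul_sub, ← hex]
          exact hdx
        have h2 : π' ^ l' ∣ y - (Finset.mem_filter.mp hmem).2.choose :=
          (mul_dvd_mul_iff_left hπ0).mp h1
        exact dvd_sub_comm.mp h2
      have hmk : Ideal.Quotient.mk (Ideal.span {π' ^ l'}) ((Finset.mem_filter.mp hmem).2.choose)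
          = Ideal.Quotient.mk (Ideal.span {π' ^ l'}) y :=
        Ideal.Quotient.eq.mpr (Ideal.mem_span_singleton.mpr hcanc)
      exact hmk.trans hy
  rw [← Nat.card_eq_finsetCard, key, card_quot]
  rw [show Zsqrtd.norm (π' ^ l') = (Zsqrtd.norm π') ^ l' from map_pow Zsqrtd.normMonoidHom π' l',
    Int.natAbs_pow, Nat.add_sub_cancel]

end Units

section QSymbol

variable {π' : GaussianInt} {q : GaussianInt → ℤ}

lemma pm_eq (hπ2 : ¬ π' ∣ 2) {a b : ℤ} (ha : a = 1 ∨ a = -1) (hb : b = 1 ∨ b = -1)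
    (hd : π' ∣ ((a : GaussianInt) - (b : GaussianInt))) : a = b := by
  rcases ha with rfl | rfl <;> rcases hb with rfl | rfl
  · rfl
  · exfalso; apply hπ2
    have e : ((1 : ℤ) : GaussianInt) - ((-1 : ℤ) : GaussianInt) = 2 := by push_cast; ring
    rwa [e] at hd
  · exfalso; apply hπ2
    have h2 := dvd_neg.mpr hd
    have e : -(((-1 : ℤ) : GaussianInt) - ((1 : ℤ) : GaussianInt)) = 2 := by push_cast; ring
    rwa [e] at h2
  · rfl

lemma q_per (hπ2 : ¬ π' ∣ 2)
    (hq : ∀ a : GaussianInt,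
      (π' ∣ a → q a = 0) ∧
      (¬ π' ∣ a → (q a = 1 ∨ q a = -1) ∧
        π' ∣ (a ^ (((Zsqrtd.norm π').natAbs - 1) / 2) - (q a : GaussianInt))))
    {x y : GaussianInt} (hd : π' ∣ x - y) : q x = q y := by
  set M := ((Zsqrtd.norm π').natAbs - 1) / 2
  by_cases hx : π' ∣ x
  · have hy : π' ∣ y := by
      have e : y = x - (x - y) := by ring
      rw [e]; exact dvd_sub hx hd
    rw [(hq x).1 hx, (hq y).1 hy]
  · have hy : ¬ π' ∣ y := by
      intro hy
      apply hx
      have e : x = y + (x - y) := by ring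
      rw [e]; exact dvd_add hy hd
    obtain ⟨hx1, hx2⟩ := (hq x).2 hx
    obtain ⟨hy1, hy2⟩ := (hq y).2 hy
    have hxy : π' ∣ x ^ M - y ^ M := hd.trans (sub_dvd_pow_sub_pow x y M)
    have hfin : π' ∣ ((q x : GaussianInt) - (q y : GaussianInt)) := by
      have e : (q x : GaussianInt) - (q y : GaussianInt)
          = (x ^ M - y ^ M) - (x ^ M - (q x : GaussianInt)) + (y ^ M - (q y : GaussianInt)) := by
        ring
      rw [e]
      exact dvd_add (dvd_sub hxy hx2) hy2
    exact pm_eq hπ2 hx1 hy1 hfin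

lemma q_mul (hπ : Prime π') (hπ2 : ¬ π' ∣ 2)
    (hq : ∀ a : GaussianInt,
      (π' ∣ a → q a = 0) ∧
      (¬ π' ∣ a → (q a = 1 ∨ q a = -1) ∧
        π' ∣ (a ^ (((Zsqrtd.norm π').natAbs - 1) / 2) - (q a : GaussianInt))))
    (c x : GaussianInt) : q (c * x) = q c * q x := by
  set M := ((Zsqrtd.norm π').natAbs - 1) / 2
  by_cases hc : π' ∣ c
  · rw [(hq c).1 hc, (hq (c * x)).1 (hc.mul_right x), zero_mul]
  by_cases hx : π' ∣ x
  · rw [(hq x).1 hx, (hq (c * x)).1 (hx.mul_left c), mul_zero]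
  have hcx : ¬ π' ∣ c * x := by
    intro hd
    rcases hπ.dvd_mul.mp hd with h | h
    exacts [hc h, hx h]
  obtain ⟨hc1, hc2⟩ := (hq c).2 hc
  obtain ⟨hx1, hx2⟩ := (hq x).2 hx
  obtain ⟨hcx1, hcx2⟩ := (hq (c * x)).2 hcx
  have key : π' ∣ ((q (c * x) : GaussianInt) - ((q c * q x : ℤ) : GaussianInt)) := by
    have e : (q (c * x) : GaussianInt) - ((q c * q x : ℤ) : GaussianInt)
        = -((c * x) ^ M - (q (c * x) : GaussianInt))
          + (c ^ M - (q c : GaussianInt)) * x ^ M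
          + (q c : GaussianInt) * (x ^ M - (q x : GaussianInt)) := by
      push_cast
      ring
    rw [e]
    exact dvd_add (dvd_add (dvd_neg.mpr hcx2) (hc2.mul_right _)) (hx2.mul_left _)
  have hb : q c * q x = 1 ∨ q c * q x = -1 := by
    rcases hc1 with h | h <;> rcases hx1 with h' | h' <;> simp [h, h']
  exact pm_eq hπ2 hcx1 hb key

lemma norm_odd (hπ : Prime π') (hodd : IsCoprime π' 2) : ¬ (2 : ℤ) ∣ Zsqrtd.norm π' := by
  intro h2
  obtain ⟨t, ht⟩ := h2
  have h2dvd : (2 : GaussianInt) ∣ π' * star π' := by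
    rw [← Zsqrtd.norm_eq_mul_conj, ht]
    push_cast
    exact ⟨(t : GaussianInt), rfl⟩
  obtain ⟨a, b, hab⟩ := hodd
  have hstar : (2 : GaussianInt) ∣ star π' := by
    have e : star π' = a * (π' * star π') + b * 2 * star π' := by
      linear_combination (-star π') * hab
    rw [e]
    exact dvd_add (h2dvd.mul_left a) ⟨b * star π', by ring⟩
  have hpi : (2 : GaussianInt) ∣ π' := by
    obtain ⟨c, hc⟩ := hstar
    refine ⟨star c, ?_⟩
    have := congrArg star hc
    simpa [mul_comm] using this
  have hunit : IsUnit (2 : GaussianInt) := (IsCoprime.isUnit_of_dvd' ⟨a, b, hab⟩ hpi dvd_rfl)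
  rw [← Zsqrtd.norm_eq_one_iff] at hunit
  have h4 : Zsqrtd.norm (2 : GaussianInt) = 4 := by
    simp [Zsqrtd.norm]
  rw [h4] at hunit
  norm_num at hunit

lemma exists_nonres (hπ : Prime π') (hodd : IsCoprime π' 2)
    (hq : ∀ a : GaussianInt,
      (π' ∣ a → q a = 0) ∧
      (¬ π' ∣ a → (q a = 1 ∨ q a = -1) ∧
        π' ∣ (a ^ (((Zsqrtd.norm π').natAbs - 1) / 2) - (q a : GaussianInt)))) :
    ∃ c : GaussianInt, ¬ π' ∣ c ∧ q c = -1 := by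
  set N := (Zsqrtd.norm π').natAbs with hN
  set M := (N - 1) / 2 with hM
  have hmax : (Ideal.span {π'}).IsMaximal :=
    PrincipalIdealRing.isMaximal_of_irreducible hπ.irreducible
  letI : Field (GaussianInt ⧸ Ideal.span {π'}) := Ideal.Quotient.field _
  have hcard : Nat.card (GaussianInt ⧸ Ideal.span {π'}) = N := card_quot π'
  have hNodd : Odd N := by
    rw [hN, Int.natAbs_odd, ← Int.not_even_iff_odd]
    exact fun h => norm_odd hπ hodd h.two_dvd
  have hN1 : N ≠ 1 := by
    intro h
    exact hπ.not_unit (Zsqrtd.norm_eq_one_iff.mp h)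
  have hN0 : N ≠ 0 := by
    intro h
    apply hπ.ne_zero
    rw [← Zsqrtd.norm_eq_zero_iff (by norm_num : (-1 : ℤ) < 0)]
    exact Int.natAbs_eq_zero.mp h
  obtain ⟨r, hr⟩ := hNodd
  have hfin : Finite (GaussianInt ⧸ Ideal.span {π'}) := by
    have hpos : 0 < Nat.card (GaussianInt ⧸ Ideal.span {π'}) := by omega
    exact (Nat.card_pos_iff.mp hpos).2
  letI : Fintype (GaussianInt ⧸ Ideal.span {π'}) := Fintype.ofFinite _
  obtain ⟨g, hg⟩ := IsCyclic.exists_generator (α := (GaussianInt ⧸ Ideal.span {π'})ˣ)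
  have horder : orderOf g = N - 1 := by
    rw [orderOf_eq_card_of_forall_mem_zpowers hg, Nat.card_units, hcard]
  have hgM : g ^ M ≠ 1 := by
    intro h
    have hdvd := orderOf_dvd_of_pow_eq_one h
    rw [horder] at hdvd
    have := Nat.le_of_dvd (by omega) hdvd
    omega
  obtain ⟨c, hc⟩ := Ideal.Quotient.mk_surjective (g : GaussianInt ⧸ Ideal.span {π'})
  have hcd : ¬ π' ∣ c := by
    intro hdvd
    have h0 : Ideal.Quotient.mk (Ideal.span {π'}) c = 0 :=
      Ideal.Quotient.eq_zero_iff_mem.mpr (Ideal.mem_span_singleton.mpr hdvd)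
    exact Units.ne_zero g (by rw [← hc, h0])
  refine ⟨c, hcd, ?_⟩
  obtain ⟨hval, heuler⟩ := (hq c).2 hcd
  rcases hval with h1 | h1
  · exfalso
    apply hgM
    have hmk : (Ideal.Quotient.mk (Ideal.span {π'}) c) ^ M = 1 := by
      rw [← map_pow, show (1 : GaussianInt ⧸ Ideal.span {π'}) = Ideal.Quotient.mk _ 1 from
        (map_one _).symm, Ideal.Quotient.eq]
      apply Ideal.mem_span_singleton.mpr
      have h2 := heuler
      rw [h1] at h2
      simpa using h2
    rw [hc] at hmk
    ext
    rw [Units.val_pow_eq_pow_val, hmk, Units.val_one]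
  · exact h1

end QSymbol

section Nontrivial

lemma exists_t0 {π' : GaussianInt} (hπ : Prime π') {u : GaussianInt} (hu : ¬ π' ∣ u) :
    ∃ t₀ : GaussianInt, etilde (toComplex (u * t₀) / toComplex π') ≠ 1 := by
  by_contra hcon
  push_neg at hcon
  have hπ0 : π' ≠ 0 := hπ.ne_zero
  have hN0 : Zsqrtd.norm π' ≠ 0 := by
    rw [Ne, Zsqrtd.norm_eq_zero_iff (by norm_num : (-1 : ℤ) < 0)]
    exact hπ0
  have hNC : ((Zsqrtd.norm π' : ℤ) : ℂ) ≠ 0 := Int.cast_ne_zero.mpr hN0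
  have key : ∀ t₀ : GaussianInt, (Zsqrtd.norm π') ∣ (u * t₀ * star π').im := by
    intro t₀
    have h1 := hcon t₀
    rw [etilde_eq_one_iff] at h1
    obtain ⟨n, hn⟩ := h1
    have he : toComplex (u * t₀) / toComplex π'
        = toComplex (u * t₀ * star π') / ((Zsqrtd.norm π' : ℤ) : ℂ) := by
      rw [div_eq_div_iff (fun h0 => hπ0 (toComplex_eq_zero.mp h0)) hNC]
      calc toComplex (u * t₀) * ((Zsqrtd.norm π' : ℤ) : ℂ)
          = toComplex (u * t₀) * toComplex (((Zsqrtd.norm π' : ℤ) : GaussianInt)) := by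
            rw [map_intCast]
        _ = toComplex (u * t₀ * (π' * star π')) := by
            rw [← map_mul, Zsqrtd.norm_eq_mul_conj]
        _ = toComplex (u * t₀ * star π') * toComplex π' := by
            rw [← map_mul]; congr 1; ring
    rw [he] at hn
    have him : (toComplex (u * t₀ * star π') / ((Zsqrtd.norm π' : ℤ) : ℂ)).im
        = (((u * t₀ * star π').im : ℤ) : ℝ) / ((Zsqrtd.norm π' : ℤ) : ℝ) := by
      rw [show ((Zsqrtd.norm π' : ℤ) : ℂ) = (((Zsqrtd.norm π' : ℤ) : ℝ) : ℂ) by push_cast; rfl,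
        Complex.div_ofReal]
      simp [GaussianInt.intCast_im]
      ring
    rw [him] at hn
    have hNR : ((Zsqrtd.norm π' : ℤ) : ℝ) ≠ 0 := Int.cast_ne_zero.mpr hN0
    rw [div_eq_iff hNR] at hn
    have hcast : ((u * t₀ * star π').im : ℤ) = n * Zsqrtd.norm π' := by exact_mod_cast hn
    exact ⟨n, by rw [hcast]; ring⟩
  have h1 := key 1
  have hi := key ⟨0, 1⟩
  rw [mul_one] at h1
  have hre : (u * ⟨0, 1⟩ * star π').im = (u * star π').re := by
    have e : u * (⟨0, 1⟩ : GaussianInt) * star π' = ⟨0, 1⟩ * (u * star π') := by ring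
    rw [e]
    simp [Zsqrtd.im_mul]
  rw [hre] at hi
  obtain ⟨p, hp⟩ := hi
  obtain ⟨qq, hqq⟩ := h1
  have hdvd : (π' * star π') ∣ (u * star π') := by
    rw [← Zsqrtd.norm_eq_mul_conj]
    refine ⟨⟨p, qq⟩, ?_⟩
    have hNg : ((Zsqrtd.norm π' : ℤ) : GaussianInt) = ⟨Zsqrtd.norm π', 0⟩ := by
      ext <;> simp
    rw [hNg]
    ext <;> simp [Zsqrtd.re_mul, Zsqrtd.im_mul, hp, hqq]
  have hstar0 : star π' ≠ 0 := by
    simpa using hπ0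
  obtain ⟨c, hc⟩ := hdvd
  have hz : star π' * (u - π' * c) = 0 := by linear_combination hc
  rcases mul_eq_zero.mp hz with h | h
  · exact hstar0 h
  · exact hu ⟨c, by linear_combination h⟩

end Nontrivial

end G13

theorem stmt_13 (π' : GaussianInt) (hπ : Prime π') (hodd : IsCoprime π' (2 : GaussianInt))
    (q : GaussianInt → ℤ)
    -- q is the quadratic residue symbol mod π', characterized by the Euler criterion
    (hq : ∀ a : GaussianInt,
      (π' ∣ a → q a = 0) ∧
      (¬ π' ∣ a → (q a = 1 ∨ q a = -1) ∧
        π' ∣ (a ^ (((Zsqrtd.norm π').natAbs - 1) / 2) - (q a : GaussianInt))))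
    (l h : ℕ) (k : GaussianInt)
    (hk : π' ^ h ∣ k ∧ ¬ π' ^ (h + 1) ∣ k)  -- h = ord_π'(k)
    (S : Finset GaussianInt)
    (hS : ∀ y : GaussianInt, ∃! x, x ∈ S ∧ π' ^ l ∣ (y - x)) :
    -- the Gauss sum g(k, π'^l), with (x/π'^l) = (x/π')^l
    (l ≤ h → Even l →
      ∑ x ∈ S, ((q x : ℂ)) ^ l *
         etilde (GaussianInt.toComplex (k * x) / GaussianInt.toComplex (π' ^ l))
        = (Nat.card ((GaussianInt ⧸ Ideal.span {π' ^ l}))ˣ : ℂ)) ∧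
    (l ≤ h → Odd l →
      ∑ x ∈ S, ((q x : ℂ)) ^ l *
         etilde (GaussianInt.toComplex (k * x) / GaussianInt.toComplex (π' ^ l)) = 0) ∧
    (l = h + 1 → Even l →
      ∑ x ∈ S, ((q x : ℂ)) ^ l *
         etilde (GaussianInt.toComplex (k * x) / GaussianInt.toComplex (π' ^ l))
        = -(((Zsqrtd.norm π').natAbs : ℂ)) ^ (l - 1)) := by
  classical
  have hπ0 : π' ≠ 0 := hπ.ne_zero
  have hπ2 : ¬ π' ∣ 2 := (hπ.coprime_iff_not_dvd).mp hodd
  have hπC : toComplex π' ≠ 0 := fun h0 => hπ0 (toComplex_eq_zero.mp h0)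
  refine ⟨?_, ?_, ?_⟩
  · -- even case, l ≤ h
    intro hlh hle
    rcases Nat.eq_zero_or_pos l with hl0 | hlpos
    · subst hl0
      have hSone : S = {G13.rep hS 0} := by
        apply Finset.eq_singleton_iff_unique_mem.mpr
        exact ⟨G13.rep_mem hS 0, fun x hx => G13.rep_unique hS hx (by simp)⟩
      rw [hSone, Finset.sum_singleton]
      haveI hsub : Subsingleton (GaussianInt ⧸ Ideal.span {π' ^ (0 : ℕ)}) := by
        rw [Ideal.Quotient.subsingleton_iff]
        simp [Ideal.span_singleton_one]
      haveI : Unique ((GaussianInt ⧸ Ideal.span {π' ^ (0 : ℕ)}))ˣ :=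
        ⟨⟨1⟩, fun a => Units.ext (Subsingleton.elim _ _)⟩
      rw [Nat.card_unique]
      simp only [pow_zero, one_mul, map_one, div_one, G13.etilde_int, Nat.cast_one]
    · have hl0' : l ≠ 0 := hlpos.ne'
      have hdvdk : π' ^ l ∣ k := (pow_dvd_pow π' hlh).trans hk.1
      obtain ⟨t, ht⟩ := hdvdk
      have hplC : toComplex (π' ^ l) ≠ 0 :=
        fun h0 => pow_ne_zero l hπ0 (toComplex_eq_zero.mp h0)
      have hterm : ∀ x : GaussianInt,
          toComplex (k * x) / toComplex (π' ^ l) = toComplex (t * x) := by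
        intro x
        rw [ht, show π' ^ l * t * x = π' ^ l * (t * x) by ring, map_mul,
          mul_div_cancel_left₀ _ hplC]
      have hstep : ∀ x : GaussianInt, ((q x : ℂ)) ^ l *
          etilde (toComplex (k * x) / toComplex (π' ^ l))
          = if ¬ π' ∣ x then (1 : ℂ) else 0 := by
        intro x
        rw [hterm x, G13.etilde_int, mul_one]
        by_cases hd : π' ∣ x
        · rw [(hq x).1 hd, if_neg (not_not_intro hd)]
          simp [zero_pow hl0']
        · rw [if_pos hd]
          rcases ((hq x).2 hd).1 with hv | hv
          · rw [hv]; norm_num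
          · rw [hv]; push_cast; exact hle.neg_one_pow
      rw [Finset.sum_congr rfl (fun x _ => hstep x), Finset.sum_boole]
      rw [G13.card_filter_not_dvd hπ hl0' hS]
  · -- odd case, l ≤ h
    intro hlh hlo
    have hl0' : l ≠ 0 := by obtain ⟨r, hr⟩ := hlo; omega
    have hdvdk : π' ^ l ∣ k := (pow_dvd_pow π' hlh).trans hk.1
    obtain ⟨t, ht⟩ := hdvdk
    have hplC : toComplex (π' ^ l) ≠ 0 :=
      fun h0 => pow_ne_zero l hπ0 (toComplex_eq_zero.mp h0)
    have hterm : ∀ x : GaussianInt,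
        toComplex (k * x) / toComplex (π' ^ l) = toComplex (t * x) := by
      intro x
      rw [ht, show π' ^ l * t * x = π' ^ l * (t * x) by ring, map_mul,
        mul_div_cancel_left₀ _ hplC]
    have hstep : ∀ x : GaussianInt, ((q x : ℂ)) ^ l *
        etilde (toComplex (k * x) / toComplex (π' ^ l)) = ((q x : ℤ) : ℂ) := by
      intro x
      rw [hterm x, G13.etilde_int, mul_one]
      by_cases hd : π' ∣ x
      · rw [(hq x).1 hd]; simp [zero_pow hl0']
      · rcases ((hq x).2 hd).1 with hv | hv
        · rw [hv]; norm_num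
        · rw [hv]; push_cast; exact hlo.neg_one_pow
    rw [Finset.sum_congr rfl (fun x _ => hstep x)]
    obtain ⟨c, hcnd, hcq⟩ := G13.exists_nonres hπ hodd hq
    have hcop : IsCoprime (π' ^ l) c := ((hπ.coprime_iff_not_dvd).mpr hcnd).pow_left
    obtain ⟨a, b, hab⟩ := hcop
    have hkey : ∑ x ∈ S, ((q (c * x) : ℤ) : ℂ) = ∑ x ∈ S, ((q x : ℤ) : ℂ) := by
      apply G13.sum_comp hS (fun x => ((q x : ℤ) : ℂ))
        (fun x y hd => congrArg _ (G13.q_per hπ2 hq ((dvd_pow_self π' hl0').trans hd)))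
        (fun x => c * x) (fun x => b * x)
      · intro x y hd
        rw [show c * x - c * y = c * (x - y) by ring]
        exact hd.mul_left c
      · intro x y hd
        rw [show b * x - b * y = b * (x - y) by ring]
        exact hd.mul_left b
      · intro x
        exact ⟨-(a * x), by linear_combination x * hab⟩
      · intro x
        exact ⟨-(a * x), by linear_combination x * hab⟩
    have hqc : ∀ x : GaussianInt, ((q (c * x) : ℤ) : ℂ) = -((q x : ℤ) : ℂ) := by
      intro x
      rw [G13.q_mul hπ hπ2 hq c x, hcq]
      push_cast
      ring
    rw [Finset.sum_congr rfl (fun x _ => hqc x), Finset.sum_neg_distrib] at hkey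
    linear_combination - hkey / 2
  · -- l = h + 1, even
    intro hlh hle
    subst hlh
    have hl0' : h + 1 ≠ 0 := Nat.succ_ne_zero h
    obtain ⟨u, hu⟩ := hk.1
    have hund : ¬ π' ∣ u := by
      rintro ⟨v, hv⟩
      exact hk.2 ⟨v, by rw [hu, hv]; ring⟩
    have hphC : toComplex (π' ^ h) ≠ 0 :=
      fun h0 => pow_ne_zero h hπ0 (toComplex_eq_zero.mp h0)
    have hterm : ∀ x : GaussianInt, toComplex (k * x) / toComplex (π' ^ (h + 1))
        = toComplex (u * x) / toComplex π' := by
      intro x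
      rw [hu, pow_succ,
        show toComplex (π' ^ h * u * x) = toComplex (π' ^ h) * toComplex (u * x) from by
          rw [show π' ^ h * u * x = π' ^ h * (u * x) by ring, map_mul],
        show toComplex (π' ^ h * π') = toComplex (π' ^ h) * toComplex π' from map_mul _ _ _,
        mul_div_mul_left _ _ hphC]
    set f : GaussianInt → ℂ := fun x => etilde (toComplex (u * x) / toComplex π') with hfdef
    have hstep : ∀ x : GaussianInt, ((q x : ℂ)) ^ (h + 1) *
        etilde (toComplex (k * x) / toComplex (π' ^ (h + 1)))
        = if ¬ π' ∣ x then f x else 0 := by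
      intro x
      rw [hterm x]
      by_cases hd : π' ∣ x
      · rw [(hq x).1 hd, if_neg (not_not_intro hd)]
        simp [zero_pow hl0']
      · have hqx1 : ((q x : ℤ) : ℂ) ^ (h + 1) = 1 := by
          rcases ((hq x).2 hd).1 with hv | hv
          · rw [hv]; norm_num
          · rw [hv]; push_cast; exact hle.neg_one_pow
        rw [hqx1, one_mul, if_pos hd]
    rw [Finset.sum_congr rfl (fun x _ => hstep x), ← Finset.sum_filter]
    have hsplit := Finset.sum_filter_add_sum_filter_not S (fun x => π' ∣ x) f
    have hmult : ∑ x ∈ S.filter (fun x => π' ∣ x), f x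
        = ((Zsqrtd.norm π').natAbs : ℂ) ^ h := by
      have hone : ∀ x ∈ S.filter (fun x => π' ∣ x), f x = 1 := by
        intro x hx
        obtain ⟨w, hw⟩ := (Finset.mem_filter.mp hx).2
        show etilde (toComplex (u * x) / toComplex π') = 1
        rw [hw, show u * (π' * w) = π' * (u * w) by ring, map_mul,
          mul_div_cancel_left₀ _ hπC, G13.etilde_int]
      rw [Finset.sum_congr rfl hone, Finset.sum_const, nsmul_eq_mul, mul_one]
      rw [G13.card_filter_dvd hπ0 hl0' hS, Nat.add_sub_cancel]
      push_cast
      ring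
    have hfull : ∑ x ∈ S, f x = 0 := by
      obtain ⟨t₀, ht₀⟩ := G13.exists_t0 hπ hund
      have hper : ∀ x y, π' ^ (h + 1) ∣ x - y → f x = f y := by
        intro x y hd
        obtain ⟨w, hw⟩ := (dvd_pow_self π' hl0').trans hd
        have hx2 : u * x = u * y + π' * (u * w) := by linear_combination u * hw
        show etilde (toComplex (u * x) / toComplex π')
          = etilde (toComplex (u * y) / toComplex π')
        rw [hx2, map_add, add_div,
          show toComplex (π' * (u * w)) = toComplex π' * toComplex (u * w) from map_mul _ _ _,
          mul_div_cancel_left₀ _ hπC, G13.etilde_add, G13.etilde_int, mul_one]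
      have hshift : ∀ x : GaussianInt,
          f (x + t₀) = etilde (toComplex (u * t₀) / toComplex π') * f x := by
        intro x
        show etilde (toComplex (u * (x + t₀)) / toComplex π')
          = etilde (toComplex (u * t₀) / toComplex π')
            * etilde (toComplex (u * x) / toComplex π')
        rw [show u * (x + t₀) = u * x + u * t₀ by ring, map_add, add_div, G13.etilde_add]
        ring
      have htrans : ∑ x ∈ S, f (x + t₀) = ∑ x ∈ S, f x := by
        apply G13.sum_comp hS f hper (fun x => x + t₀) (fun x => x - t₀)
        · intro x y hd
          rw [show x + t₀ - (y + t₀) = x - y by ring]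
          exact hd
        · intro x y hd
          rw [show x - t₀ - (y - t₀) = x - y by ring]
          exact hd
        · intro x
          rw [show x + t₀ - t₀ - x = 0 by ring]
          exact dvd_zero _
        · intro x
          rw [show x - t₀ + t₀ - x = 0 by ring]
          exact dvd_zero _
      rw [Finset.sum_congr rfl (fun x _ => hshift x), ← Finset.mul_sum] at htrans
      have hz : (etilde (toComplex (u * t₀) / toComplex π') - 1) * (∑ x ∈ S, f x) = 0 := by
        linear_combination htrans
      rcases mul_eq_zero.mp hz with hz1 | hz2
      · exact absurd (by linear_combination hz1) ht₀
      · exact hz2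
    rw [hfull] at hsplit
    rw [Nat.add_sub_cancel]
    linear_combination hsplit - hmult
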